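/- Assume the Hypothesis. Then for every nonzero a ∈ K and x ∈ O, 1 + x − x/f(a) ∈ f(K). -/

import Mathlib

open scoped Classical

/-- The cross-ratio `[a,b;c,d]` on the projective line `F ∪ {∞}` (modelled as
`Option F`, with `none` playing the role of `∞`), with the usual conventions
at `∞`; junk value `0` when two or more of the arguments are `∞`. -/
noncomputable def crossRatio {F : Type*} [Field F] :
    Option F → Option F → Option F → Option F → F
  | none,   some b, some c, some d => (d - b) / (c - b)
  | some a, none,   some c, some d => (c - a) / (d - a)
  | some a, some b, none,   some d => (d - b) / (d - a)
  | some a, some b, some c, none   => (c - a) / (c - b)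
  | some a, some b, some c, some d => ((c - a) / (c - b)) * ((d - b) / (d - a))
  | _, _, _, _ => 0

/-- A permutation `f` of the projective line is `O`-preserving if for all
quadruples of distinct points, `[a,b;c,d] ∈ O ↔ [f a, f b; f c, f d] ∈ O`. -/
def OPreserving {F : Type*} [Field F] (O : Set F) (f : Equiv.Perm (Option F)) : Prop :=
  ∀ a b c d : Option F, a ≠ b → a ≠ c → a ≠ d → b ≠ c → b ≠ d → c ≠ d →
    (crossRatio a b c d ∈ O ↔ crossRatio (f a) (f b) (f c) (f d) ∈ O)

/-- The map `F → F` induced by a permutation of `F ∪ {∞}` fixing `∞`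
(junk value `0` if `f` maps a finite point to `∞`). -/
noncomputable def fmap {F : Type*} [Field F] (f : Equiv.Perm (Option F)) (a : F) : F :=
  (f (some a)).getD 0

/-- points of `K ∪ {∞}` -/
def Kpt {F : Type*} [Field F] (O : Set F) (p : Option F) : Prop :=
  p = none ∨ ∃ k ∈ Subfield.closure O, p = some k

lemma core {F : Type*} [Field F] (O : Set F) (hO : ∀ x ∈ O, x ≠ 0 ∧ x ≠ 1)
    (f : Equiv.Perm (Option F)) (hf : OPreserving O f)
    (α β γ w : Option F) (hα : Kpt O α) (hβ : Kpt O β) (hγ : Kpt O γ)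
    (e1 : f α ≠ f β) (e2 : f α ≠ f γ) (e3 : f α ≠ f w)
    (e4 : f β ≠ f γ) (e5 : f β ≠ f w) (e6 : f γ ≠ f w)
    (hcr : crossRatio (f α) (f β) (f γ) (f w) ∈ O) : Kpt O w := by
  have d1 : α ≠ β := fun h => e1 (by rw [h])
  have d2 : α ≠ γ := fun h => e2 (by rw [h])
  have d3 : α ≠ w := fun h => e3 (by rw [h])
  have d4 : β ≠ γ := fun h => e4 (by rw [h])
  have d5 : β ≠ w := fun h => e5 (by rw [h])
  have d6 : γ ≠ w := fun h => e6 (by rw [h])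
  have hy : crossRatio α β γ w ∈ O := (hf α β γ w d1 d2 d3 d4 d5 d6).mpr hcr
  obtain ⟨hy0, hy1⟩ := hO _ hy
  have hyK : crossRatio α β γ w ∈ Subfield.closure O := Subfield.subset_closure hy
  rcases w with _ | ω
  · exact Or.inl rfl
  right
  refine ⟨ω, ?_, rfl⟩
  have Ksome : ∀ q : F, Kpt O (some q) → q ∈ Subfield.closure O := by
    rintro q (h | ⟨k, hk, h⟩)
    · exact absurd h (Option.some_ne_none q)
    · rwa [Option.some_inj.mp h]
  rcases α with _ | a <;> rcases β with _ | b <;> rcases γ with _ | c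
  · exact absurd rfl d1
  · exact absurd rfl d1
  · exact absurd rfl d2
  · -- α = ∞, β = b, γ = c : y = (ω - b)/(c - b)
    have hb := Ksome b hβ; have hc := Ksome c hγ
    have hcb : c - b ≠ 0 := sub_ne_zero.mpr fun h => d4 (by rw [h])
    have key : ω = b + crossRatio none (some b) (some c) (some ω) * (c - b) := by
      simp only [crossRatio]
      field_simp
      ring
    rw [key]
    exact add_mem hb (mul_mem hyK (sub_mem hc hb))
  · exact absurd rfl d4
  · -- α = a, β = ∞, γ = c : y = (c - a)/(ω - a)
    have ha := Ksome a hα; have hc := Ksome c hγ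
    have hwa : ω - a ≠ 0 := sub_ne_zero.mpr fun h => d3 (by rw [h])
    have hca : c - a ≠ 0 := sub_ne_zero.mpr fun h => d2 (by rw [h])
    have key : ω = a + (c - a) / crossRatio (some a) none (some c) (some ω) := by
      simp only [crossRatio] at hy0 ⊢
      field_simp
      ring
    rw [key]
    exact add_mem ha (div_mem (sub_mem hc ha) hyK)
  · -- α = a, β = b, γ = ∞ : y = (ω - b)/(ω - a)
    have ha := Ksome a hα; have hb := Ksome b hβ
    have hwa : ω - a ≠ 0 := sub_ne_zero.mpr fun h => d3 (by rw [h])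
    have hab : b - a ≠ 0 := sub_ne_zero.mpr fun h => d1 (by rw [h])
    set y := crossRatio (some a) (some b) none (some ω) with hydef
    have hyv : y = (ω - b) / (ω - a) := by simp only [hydef, crossRatio]
    have h1y : 1 - y ≠ 0 := by
      rw [hyv, sub_ne_zero]
      intro h
      have := (div_eq_one_iff_eq hwa).mp h.symm
      exact hab (by linear_combination - this)
    have key : ω = (b - y * a) / (1 - y) := by
      rw [eq_div_iff h1y, hyv]
      field_simp
      ring
    rw [key]
    exact div_mem (sub_mem hb (mul_mem hyK ha)) (sub_mem (one_mem _) hyK)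
  · -- all finite : y = ((c-a)/(c-b)) * ((ω-b)/(ω-a))
    have ha := Ksome a hα; have hb := Ksome b hβ; have hc := Ksome c hγ
    have hwa : ω - a ≠ 0 := sub_ne_zero.mpr fun h => d3 (by rw [h])
    have hca : c - a ≠ 0 := sub_ne_zero.mpr fun h => d2 (by rw [h])
    have hcb : c - b ≠ 0 := sub_ne_zero.mpr fun h => d4 (by rw [h])
    have hab : b - a ≠ 0 := sub_ne_zero.mpr fun h => d1 (by rw [h])
    set y := crossRatio (some a) (some b) (some c) (some ω) with hydef
    have hyv : y = ((c - a) / (c - b)) * ((ω - b) / (ω - a)) := by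
      simp only [hydef, crossRatio]
    set z := y * (c - b) / (c - a) with hzdef
    have hzK : z ∈ Subfield.closure O :=
      div_mem (mul_mem hyK (sub_mem hc hb)) (sub_mem hc ha)
    have hzv : z = (ω - b) / (ω - a) := by
      rw [hzdef, hyv]; field_simp
    have h1z : 1 - z ≠ 0 := by
      rw [hzv, sub_ne_zero]
      intro h
      have := (div_eq_one_iff_eq hwa).mp h.symm
      exact hab (by linear_combination - this)
    have key : ω = (b - z * a) / (1 - z) := by
      rw [eq_div_iff h1z, hzv]
      field_simp
      ring
    rw [key]
    exact div_mem (sub_mem hb (mul_mem hzK ha)) (sub_mem (one_mem _) hzK)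

lemma pull {F : Type*} [Field F] (O : Set F) (f : Equiv.Perm (Option F))
    (hinf : f none = none) (v : F) (h : Kpt O (f.symm (some v))) :
    ∃ k ∈ Subfield.closure O, f (some k) = some v := by
  rcases h with h | ⟨k, hk, h⟩
  · exfalso
    have := f.apply_symm_apply (some v)
    rw [h, hinf] at this
    exact Option.some_ne_none v this.symm
  · exact ⟨k, hk, by rw [← h, f.apply_symm_apply]⟩

/-- Here `Subfield.closure O` is the subfield `K = k(O)` of `F` generated by `O`
(over the prime field `k`), and `fmap f '' K` is the image `f(K)` of `K` under `f`. -/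
theorem second_closure_two {F : Type*} [Field F]
    (O : Set F) (hne : O.Nonempty) (hO : ∀ x ∈ O, x ≠ 0 ∧ x ≠ 1)
    (f : Equiv.Perm (Option F)) (hf : OPreserving O f)
    (hinf : f none = none) (h0 : f (some 0) = some 0) (h1 : f (some 1) = some 1) :
    ∀ a ∈ Subfield.closure O, a ≠ 0 → ∀ x ∈ O,
      1 + x - x / fmap f a ∈ fmap f '' (Subfield.closure O : Set F) := by
  intro a ha ha0 x hx
  obtain ⟨hx0, hx1⟩ := hO x hx
  have h1x : (1:F) - x ≠ 0 := sub_ne_zero.mpr fun h => hx1 h.symm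
  have hfin : ∀ q : F, f (some q) = some (fmap f q) := by
    intro q
    cases h : f (some q) with
    | none => exact absurd (f.injective (h.trans hinf.symm)) (Option.some_ne_none q)
    | some v => simp [fmap, h]
  set A := fmap f a with hAdef
  have hfa : f (some a) = some A := hfin a
  by_cases ha1 : a = 1
  · have hAone : A = 1 := by
      rw [ha1, h1] at hfa
      exact (Option.some_inj.mp hfa).symm
    refine ⟨1, one_mem _, ?_⟩
    have hf1 : fmap f 1 = 1 := by simp [fmap, h1]
    rw [hf1, hAone, div_one]
    ring
  have hA0 : A ≠ 0 := by
    intro h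
    apply ha0
    have : f (some a) = f (some 0) := by rw [hfa, h, h0]
    exact Option.some_inj.mp (f.injective this)
  have hA1 : A ≠ 1 := by
    intro h
    apply ha1
    have : f (some a) = f (some 1) := by rw [hfa, h, h1]
    exact Option.some_inj.mp (f.injective this)
  have hA1' : A - 1 ≠ 0 := sub_ne_zero.mpr hA1
  by_cases hAx : A = x
  · -- then 1 + x - x/A = x, and x ∈ f(K)
    have hK : Kpt O (f.symm (some x)) := by
      apply core O hO f hf none (some 0) (some 1) (f.symm (some x))
        (Or.inl rfl) (Or.inr ⟨0, zero_mem _, rfl⟩) (Or.inr ⟨1, one_mem _, rfl⟩)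
      · rw [hinf, h0]; exact fun h => Option.some_ne_none _ h.symm
      · rw [hinf, h1]; exact fun h => Option.some_ne_none _ h.symm
      · rw [hinf, f.apply_symm_apply]; exact fun h => Option.some_ne_none _ h.symm
      · rw [h0, h1]; simp
      · rw [h0, f.apply_symm_apply]; simpa using fun h => hx0 h.symm
      · rw [h1, f.apply_symm_apply]; simpa using fun h => hx1 h.symm
      · rw [hinf, h0, h1, f.apply_symm_apply]
        have : crossRatio none (some 0) (some 1) (some x) = x := by
          simp [crossRatio]
        rwa [this]
    obtain ⟨k, hk, hkf⟩ := pull O f hinf x hK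
    refine ⟨k, hk, ?_⟩
    have : fmap f k = x := by simp [fmap, hkf]
    rw [this, ← hAx, div_self hA0]
    ring
  have hAx' : A - x ≠ 0 := sub_ne_zero.mpr hAx
  set u1 : F := (A - x) / (1 - x) with hu1def
  set u2 : F := (A - x) / (A * (1 - x)) with hu2def
  set t : F := 1 + x - x / A with htdef
  have hu10 : u1 ≠ 0 := div_ne_zero hAx' h1x
  have hu11 : u1 ≠ 1 := by
    rw [hu1def, Ne, div_eq_one_iff_eq h1x]
    intro h; exact hA1 (by linear_combination h)
  have hu1A : u1 ≠ A := by
    rw [hu1def, Ne, div_eq_iff h1x]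
    intro h
    have h2 : x * (A - 1) = 0 := by linear_combination h
    rcases mul_eq_zero.mp h2 with h3 | h3
    · exact hx0 h3
    · exact hA1' h3
  have hA1x : A * (1 - x) ≠ 0 := mul_ne_zero hA0 h1x
  have hu20 : u2 ≠ 0 := div_ne_zero hAx' hA1x
  have hu21 : u2 ≠ 1 := by
    rw [hu2def, Ne, div_eq_one_iff_eq hA1x]
    intro h
    have h2 : x * (A - 1) = 0 := by linear_combination h
    rcases mul_eq_zero.mp h2 with h3 | h3
    · exact hx0 h3
    · exact hA1' h3
  have hu12 : u1 ≠ u2 := by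
    rw [hu1def, hu2def, Ne, div_eq_div_iff h1x hA1x]
    intro h
    have h2 : (A - x) * (1 - x) * (A - 1) = 0 := by linear_combination h
    rcases mul_eq_zero.mp h2 with h3 | h3
    · rcases mul_eq_zero.mp h3 with h4 | h4
      · exact hAx' h4
      · exact h1x h4
    · exact hA1' h3
  have ht1 : t ≠ 1 := by
    rw [htdef]
    intro h
    have e := congrArg (· * A) h
    simp only [sub_mul, add_mul, one_mul, div_mul_cancel₀ _ hA0] at e
    have h2 : x * (A - 1) = 0 := by linear_combination e
    rcases mul_eq_zero.mp h2 with h3 | h3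
    · exact hx0 h3
    · exact hA1' h3
  have htu2 : t ≠ u2 := by
    have hid : t - u2 = x * (1 - u2) := by
      rw [htdef, hu2def]
      field_simp
      ring
    intro h
    rw [h, sub_self] at hid
    rcases mul_eq_zero.mp hid.symm with h3 | h3
    · exact hx0 h3
    · exact hu21 (by linear_combination -h3)
  -- Step 1 : get k1 with f k1 = u1
  have hK1 : Kpt O (f.symm (some u1)) := by
    apply core O hO f hf (some 1) (some a) none (f.symm (some u1))
      (Or.inr ⟨1, one_mem _, rfl⟩) (Or.inr ⟨a, ha, rfl⟩) (Or.inl rfl)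
    · rw [h1, hfa]; simpa using fun h => hA1 h.symm
    · rw [h1, hinf]; simp
    · rw [h1, f.apply_symm_apply]; simpa using fun h => hu11 h.symm
    · rw [hfa, hinf]; simp
    · rw [hfa, f.apply_symm_apply]; simpa using fun h => hu1A h.symm
    · rw [hinf, f.apply_symm_apply]; simp
    · rw [h1, hfa, hinf, f.apply_symm_apply]
      have hden : u1 - 1 ≠ 0 := sub_ne_zero.mpr hu11
      have : crossRatio (some 1) (some A) none (some u1) = x := by
        simp only [crossRatio]
        rw [div_eq_iff hden, hu1def]
        field_simp
        ring
      rwa [this]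
  obtain ⟨k1, hk1, hk1f⟩ := pull O f hinf u1 hK1
  -- Step 2 : get k2 with f k2 = u2
  have hK2 : Kpt O (f.symm (some u2)) := by
    apply core O hO f hf (some 0) (some 1) (some k1) (f.symm (some u2))
      (Or.inr ⟨0, zero_mem _, rfl⟩) (Or.inr ⟨1, one_mem _, rfl⟩) (Or.inr ⟨k1, hk1, rfl⟩)
    · rw [h0, h1]; simp
    · rw [h0, hk1f]; simpa using fun h => hu10 h.symm
    · rw [h0, f.apply_symm_apply]; simpa using fun h => hu20 h.symm
    · rw [h1, hk1f]; simpa using fun h => hu11 h.symm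
    · rw [h1, f.apply_symm_apply]; simpa using fun h => hu21 h.symm
    · rw [hk1f, f.apply_symm_apply]; simpa using hu12
    · rw [h0, h1, hk1f, f.apply_symm_apply]
      have hd1 : u1 - 1 ≠ 0 := sub_ne_zero.mpr hu11
      have : crossRatio (some 0) (some 1) (some u1) (some u2) = x := by
        simp only [crossRatio]
        rw [div_mul_div_comm, div_eq_iff (mul_ne_zero hd1 (by rw [sub_zero]; exact hu20))]
        rw [hu1def, hu2def]
        field_simp
        ring
      rwa [this]
  obtain ⟨k2, hk2, hk2f⟩ := pull O f hinf u2 hK2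
  -- Step 3 : get k3 with f k3 = t
  have hK3 : Kpt O (f.symm (some t)) := by
    apply core O hO f hf none (some k2) (some 1) (f.symm (some t))
      (Or.inl rfl) (Or.inr ⟨k2, hk2, rfl⟩) (Or.inr ⟨1, one_mem _, rfl⟩)
    · rw [hinf, hk2f]; simp
    · rw [hinf, h1]; simp
    · rw [hinf, f.apply_symm_apply]; simp
    · rw [hk2f, h1]; simpa using hu21
    · rw [hk2f, f.apply_symm_apply]; simpa using fun h => htu2 h.symm
    · rw [h1, f.apply_symm_apply]; simpa using fun h => ht1 h.symm
    · rw [hinf, hk2f, h1, f.apply_symm_apply]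
      have hd2 : (1:F) - u2 ≠ 0 := sub_ne_zero.mpr fun h => hu21 h.symm
      have : crossRatio none (some u2) (some 1) (some t) = x := by
        simp only [crossRatio]
        rw [div_eq_iff hd2, htdef, hu2def]
        field_simp
        ring
      rwa [this]
  obtain ⟨k3, hk3, hk3f⟩ := pull O f hinf t hK3
  exact ⟨k3, hk3, by simp [fmap, hk3f]⟩
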